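/- Angular kernel estimate. For all real numbers A, B, σ > 0, one has ∫₀^π 1_{A² + 2B²(1−cos θ) ≤ σ²} · (A² + 2B²(1−cos θ))^{−1/2} dθ ≤ (π/(2B)) ( ln 2 + ln₊(σ/A) ). -/

import Mathlib

open intervalIntegral

/-- Angular kernel estimate: for all `A, B, σ > 0`,
`∫₀^π 1_{A²+2B²(1−cos θ) ≤ σ²} (A²+2B²(1−cos θ))^{−1/2} dθ
  ≤ (π/(2B))(ln 2 + ln₊(σ/A))`. -/
theorem angular_kernel_estimate (A B σ : ℝ) (hA : 0 < A) (hB : 0 < B) (hσ : 0 < σ) :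
    (∫ θ in (0 : ℝ)..Real.pi,
        if A ^ 2 + 2 * B ^ 2 * (1 - Real.cos θ) ≤ σ ^ 2 then
          (Real.sqrt (A ^ 2 + 2 * B ^ 2 * (1 - Real.cos θ)))⁻¹ else 0) ≤
      Real.pi / (2 * B) * (Real.log 2 + max (Real.log (σ / A)) 0) := by
  have hπ := Real.pi_pos
  set f : ℝ → ℝ := fun θ =>
    if A ^ 2 + 2 * B ^ 2 * (1 - Real.cos θ) ≤ σ ^ 2 then
      (Real.sqrt (A ^ 2 + 2 * B ^ 2 * (1 - Real.cos θ)))⁻¹ else 0 with hf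
  -- RHS nonneg facts
  have hlog2 : (0:ℝ) ≤ Real.log 2 := Real.log_nonneg one_le_two
  by_cases hAσ : σ < A
  · have hz : ∀ θ, f θ = 0 := by
      intro θ
      rw [hf]
      refine if_neg ?_
      intro h
      nlinarith [Real.cos_le_one θ, sq_nonneg B]
    have hI : (∫ θ in (0:ℝ)..Real.pi, f θ) = 0 := by
      simp only [hz]
      exact intervalIntegral.integral_zero
    rw [hI]
    have : (0:ℝ) ≤ Real.log 2 + max (Real.log (σ / A)) 0 := by positivity
    positivity
  push_neg at hAσ
  -- main case A ≤ σ
  set c : ℝ := 2 * B / Real.pi with hcdef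
  have hc : 0 < c := by positivity
  set s : ℝ := Real.sqrt (σ ^ 2 - A ^ 2) with hsdef
  have hs0 : 0 ≤ s := Real.sqrt_nonneg _
  have hs2 : s ^ 2 = σ ^ 2 - A ^ 2 := Real.sq_sqrt (by nlinarith)
  set T : ℝ := min Real.pi (s / c) with hTdef
  have hT0 : 0 ≤ T := le_min hπ.le (by positivity)
  have hTπ : T ≤ Real.pi := min_le_left _ _
  -- key pointwise inequality
  have key : ∀ θ : ℝ, 0 ≤ θ → θ ≤ Real.pi → c ^ 2 * θ ^ 2 ≤ 2 * B ^ 2 * (1 - Real.cos θ) := by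
    intro θ h0 h1
    have := Real.cos_le_one_sub_mul_cos_sq (x := θ) (by rw [abs_of_nonneg h0]; exact h1)
    have hππ : Real.pi ^ 2 > 0 := by positivity
    have h4 : 2 / Real.pi ^ 2 * θ ^ 2 ≤ 1 - Real.cos θ := by linarith
    have h5 : 2 * θ ^ 2 ≤ (1 - Real.cos θ) * Real.pi ^ 2 := by
      have h6 := mul_le_mul_of_nonneg_right h4 hππ.le
      field_simp at h6
      linarith
    rw [hcdef, div_pow, div_mul_eq_mul_div, div_le_iff₀ hππ]
    nlinarith [mul_le_mul_of_nonneg_left h5 (by positivity : (0:ℝ) ≤ B ^ 2)]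
  set G : ℝ → ℝ := fun θ => (Real.sqrt (A ^ 2 + c ^ 2 * θ ^ 2))⁻¹ with hG
  have hpos : ∀ θ : ℝ, 0 < A ^ 2 + c ^ 2 * θ ^ 2 := fun θ => by positivity
  have hGcont : Continuous G := by
    apply Continuous.inv₀
    · fun_prop
    · intro θ; exact (Real.sqrt_pos.mpr (hpos θ)).ne'
  -- f ≤ G on [0, π]
  have hfle : ∀ θ ∈ Set.Icc (0:ℝ) Real.pi, f θ ≤ G θ := by
    intro θ hθ
    rw [hf, hG]
    dsimp only
    split_ifs with h
    · apply inv_anti₀ (Real.sqrt_pos.mpr (hpos θ))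
      exact Real.sqrt_le_sqrt (by linarith [key θ hθ.1 hθ.2])
    · positivity
  -- f nonneg, bounded
  have hfb : ∀ θ, |f θ| ≤ A⁻¹ := by
    intro θ
    rw [hf]; dsimp only
    split_ifs with h
    · rw [abs_of_nonneg (by positivity)]
      apply inv_anti₀ hA
      calc A = Real.sqrt (A ^ 2) := (Real.sqrt_sq hA.le).symm
        _ ≤ _ := Real.sqrt_le_sqrt (by nlinarith [Real.cos_le_one θ])
    · simp; positivity
  have hfm : Measurable f := by
    apply Measurable.ite
    · exact measurableSet_le (by fun_prop) measurable_const
    · fun_prop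
    · exact measurable_const
  have hfi : ∀ a b : ℝ, IntervalIntegrable f MeasureTheory.volume a b := by
    intro a b
    apply IntervalIntegrable.mono_fun (_root_.intervalIntegrable_const (c := A⁻¹))
      hfm.aestronglyMeasurable
    filter_upwards with θ
    rw [Real.norm_eq_abs, Real.norm_eq_abs, abs_of_nonneg (by positivity : (0:ℝ) ≤ A⁻¹)]
    exact hfb θ
  -- split the integral
  have hsplit : (∫ θ in (0:ℝ)..Real.pi, f θ)
      = (∫ θ in (0:ℝ)..T, f θ) + ∫ θ in T..Real.pi, f θ :=
    (intervalIntegral.integral_add_adjacent_intervals (hfi 0 T) (hfi T Real.pi)).symm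
  have htail : (∫ θ in T..Real.pi, f θ) = 0 := by
    rcases le_or_gt Real.pi (s / c) with h | h
    · rw [hTdef, min_eq_left h, intervalIntegral.integral_same]
    · rw [intervalIntegral.integral_of_le hTπ]
      apply MeasureTheory.setIntegral_eq_zero_of_forall_eq_zero
      intro θ hθ
      have hθT : T < θ := hθ.1
      have hθπ : θ ≤ Real.pi := hθ.2
      have hT : T = s / c := min_eq_right h.le
      have hθ0 : 0 ≤ θ := le_trans hT0 hθT.le
      have hcθ : s < c * θ := by
        rw [hT] at hθT
        calc s = c * (s / c) := by field_simp
          _ < c * θ := by exact mul_lt_mul_of_pos_left hθT hc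
      rw [hf]
      have hk := key θ hθ0 hθπ
      refine if_neg ?_
      intro hcond
      nlinarith
  -- FTC for G
  have hderiv : ∀ θ ∈ Set.uIcc (0:ℝ) T,
      HasDerivAt (fun t => c⁻¹ * Real.arsinh (c * t / A)) (G θ) θ := by
    intro θ _
    have h1 : HasDerivAt (fun t : ℝ => c * t / A) (c / A) θ := by
      simpa using ((hasDerivAt_id θ).const_mul c).div_const A
    have h2 := (Real.hasDerivAt_arsinh (c * θ / A)).comp θ h1
    have h3 := h2.const_mul c⁻¹
    refine h3.congr_deriv ?_
    rw [hG]
    dsimp only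
    have heq : 1 + (c * θ / A) ^ 2 = (A ^ 2 + c ^ 2 * θ ^ 2) / A ^ 2 := by
      field_simp
    have hsq : Real.sqrt (1 + (c * θ / A) ^ 2) = Real.sqrt (A ^ 2 + c ^ 2 * θ ^ 2) / A := by
      rw [heq, Real.sqrt_div (hpos θ).le, Real.sqrt_sq hA.le]
    rw [hsq]
    have := (Real.sqrt_pos.mpr (hpos θ)).ne'
    field_simp
  have hGint : IntervalIntegrable G MeasureTheory.volume 0 T :=
    hGcont.intervalIntegrable 0 T
  have hGval : (∫ θ in (0:ℝ)..T, G θ)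
      = c⁻¹ * Real.arsinh (c * T / A) := by
    rw [intervalIntegral.integral_eq_sub_of_hasDerivAt hderiv hGint]
    simp
  -- compare
  have hmono : (∫ θ in (0:ℝ)..T, f θ) ≤ ∫ θ in (0:ℝ)..T, G θ := by
    apply intervalIntegral.integral_mono_on hT0 (hfi 0 T) hGint
    intro θ hθ
    exact hfle θ ⟨hθ.1, le_trans hθ.2 hTπ⟩
  -- bound arsinh value
  have hcT : c * T ≤ s := by
    calc c * T ≤ c * (s / c) := mul_le_mul_of_nonneg_left (min_le_right _ _) hc.le
      _ = s := by field_simp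
  have hsσ : s ≤ σ := by
    rw [hsdef]
    calc Real.sqrt (σ ^ 2 - A ^ 2) ≤ Real.sqrt (σ ^ 2) := Real.sqrt_le_sqrt (by nlinarith)
      _ = σ := Real.sqrt_sq hσ.le
  have harsinh : Real.arsinh (c * T / A) ≤ Real.log 2 + Real.log (σ / A) := by
    have h1 : Real.arsinh (c * T / A) ≤ Real.arsinh (s / A) :=
      Real.arsinh_le_arsinh.mpr (by gcongr)
    refine h1.trans ?_
    rw [← Real.log_mul two_ne_zero (by positivity)]
    rw [Real.arsinh]
    apply Real.log_le_log (by positivity)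
    have hsq : Real.sqrt (1 + (s / A) ^ 2) = σ / A := by
      rw [div_pow, ← Real.sqrt_sq (by positivity : (0:ℝ) ≤ σ / A)]
      congr 1
      rw [div_pow]
      rw [hs2]
      field_simp
      ring
    rw [hsq]
    have h2 : s / A ≤ σ / A := by gcongr
    linarith
  have hmax : max (Real.log (σ / A)) 0 = Real.log (σ / A) :=
    max_eq_left (Real.log_nonneg ((one_le_div hA).mpr hAσ))
  have hcinv : c⁻¹ = Real.pi / (2 * B) := by
    rw [hcdef]; field_simp
  calc (∫ θ in (0:ℝ)..Real.pi, f θ) = (∫ θ in (0:ℝ)..T, f θ) + ∫ θ in T..Real.pi, f θ := hsplit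
    _ = ∫ θ in (0:ℝ)..T, f θ := by rw [htail, add_zero]
    _ ≤ ∫ θ in (0:ℝ)..T, G θ := hmono
    _ = c⁻¹ * Real.arsinh (c * T / A) := hGval
    _ ≤ c⁻¹ * (Real.log 2 + Real.log (σ / A)) := by
        apply mul_le_mul_of_nonneg_left harsinh (by positivity)
    _ = Real.pi / (2 * B) * (Real.log 2 + max (Real.log (σ / A)) 0) := by
        rw [hmax, hcinv]
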